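/- Let (t_n)_{n≥0} be a strongly b-multiplicative sequence with values in {−1,0,1} and let p be a prime such that b < p and the residue class of b generates the multiplicative group (ℤ/p)^×. Let ξ := Π_{j=1}^{p−1} (Σ_{c=0}^{b−1} t_c ζ_p^{jc}) (a real number, equal to the field norm N_{ℚ(ζ_p)/ℚ}(Σ_{c=0}^{b−1} t_c ζ_p^c)), where ζ_p = exp(2πi/p). Assume |ξ| > max((Σ_{c=0}^{b−1} t_c)^{p−1}, 1). Then Σ_{n<N, p∣n} t_n = O(N^{log(ξ)/((p−1)·log b)}), i.e. there is a constant C such that |Σ_{n<N, p∣n} t_n| ≤ C·N^{log(ξ)/((p−1) log b)} for all N ≥ 1. -/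

import Mathlib

open Finset Real

namespace Rare

noncomputable def S (t : ℕ → ℝ) (ζ : ℂ) (b j : ℕ) : ℂ :=
  ∑ c ∈ Finset.range b, (t c : ℂ) * ζ ^ (j * c)

noncomputable def G (t : ℕ → ℝ) (ζ : ℂ) (j N : ℕ) : ℂ :=
  ∑ n ∈ Finset.range N, (t n : ℂ) * ζ ^ (j * n)

variable {t : ℕ → ℝ} {ζ : ℂ} {p : ℕ}

theorem pow_mod (hζp : ζ ^ p = 1) (a : ℕ) : ζ ^ a = ζ ^ (a % p) := by
  conv_lhs => rw [← Nat.div_add_mod a p]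
  rw [pow_add, pow_mul, hζp, one_pow, one_mul]

theorem pow_per (hζp : ζ ^ p = 1) {a a' : ℕ} (h : a ≡ a' [MOD p]) : ζ ^ a = ζ ^ a' := by
  rw [pow_mod hζp a, pow_mod hζp a', h]

theorem S_per (hζp : ζ ^ p = 1) {j j' : ℕ} (h : j ≡ j' [MOD p]) (b : ℕ) :
    S t ζ b j = S t ζ b j' := by
  unfold S
  exact Finset.sum_congr rfl fun c _ => by rw [pow_per hζp (Nat.ModEq.mul_right c h)]

theorem G_per (hζp : ζ ^ p = 1) {j j' : ℕ} (h : j ≡ j' [MOD p]) (N : ℕ) :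
    G t ζ j N = G t ζ j' N := by
  unfold G
  exact Finset.sum_congr rfl fun n _ => by rw [pow_per hζp (Nat.ModEq.mul_right n h)]

theorem sum_range_mul' (f : ℕ → ℂ) (b M : ℕ) :
    ∑ n ∈ Finset.range (b * M), f n = ∑ m ∈ Finset.range M, ∑ c ∈ Finset.range b, f (b * m + c) := by
  induction M with
  | zero => simp
  | succ M ih =>
      rw [Finset.sum_range_succ, ← ih, Nat.mul_succ, Finset.sum_range_add]

theorem G_step (b : ℕ) (hmul : ∀ n : ℕ, ∀ c : ℕ, c < b → t (b * n + c) = t n * t c)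
    (j M r : ℕ) :
    G t ζ j (b * M + r) =
      S t ζ b j * G t ζ (j * b) M +
        ∑ c ∈ Finset.range r, (t (b * M + c) : ℂ) * ζ ^ (j * (b * M + c)) := by
  unfold G
  rw [Finset.sum_range_add, sum_range_mul']
  congr 1
  unfold S
  rw [Finset.mul_sum]
  refine Finset.sum_congr rfl fun m _ => ?_
  rw [Finset.sum_mul]
  refine Finset.sum_congr rfl fun c hc => ?_
  rw [hmul m c (Finset.mem_range.mp hc)]
  push_cast
  have h2 : j * (b * m + c) = j * c + j * b * m := by ring
  rw [h2, pow_add]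
  ring


theorem abs_S_le (habs : ‖ζ‖ = 1) (ht1 : ∀ n, |t n| ≤ 1) (b j : ℕ) :
    ‖S t ζ b j‖ ≤ b := by
  unfold S
  refine le_trans (norm_sum_le _ _) ?_
  calc ∑ c ∈ Finset.range b, ‖(t c : ℂ) * ζ ^ (j * c)‖
      ≤ ∑ _c ∈ Finset.range b, (1 : ℝ) := by
        refine Finset.sum_le_sum fun c _ => ?_
        rw [norm_mul, norm_pow, habs, one_pow, mul_one, Complex.norm_real, Real.norm_eq_abs]
        exact ht1 c
    _ = b := by simp

theorem G_one_step (b : ℕ) (hb : 1 ≤ b) (hmul : ∀ n : ℕ, ∀ c : ℕ, c < b → t (b * n + c) = t n * t c)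
    (habs : ‖ζ‖ = 1) (ht1 : ∀ n, |t n| ≤ 1) (j N : ℕ) :
    ‖G t ζ j N‖ ≤
      ‖S t ζ b j‖ * ‖G t ζ (j * b) (N / b)‖ + b := by
  conv_lhs => rw [← Nat.div_add_mod N b, mul_comm b (N / b)]
  rw [mul_comm (N / b) b, G_step b hmul]
  refine le_trans (norm_add_le _ _) ?_
  rw [norm_mul]
  gcongr
  refine le_trans (norm_sum_le _ _) ?_
  calc ∑ c ∈ Finset.range (N % b), ‖(t (b * (N / b) + c) : ℂ) * ζ ^ (j * (b * (N / b) + c))‖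
      ≤ ∑ _c ∈ Finset.range (N % b), (1 : ℝ) := by
        refine Finset.sum_le_sum fun c _ => ?_
        rw [norm_mul, norm_pow, habs, one_pow, mul_one, Complex.norm_real, Real.norm_eq_abs]
        exact ht1 _
    _ = (N % b : ℕ) := by simp
    _ ≤ b := by exact_mod_cast Nat.le_of_lt (Nat.mod_lt _ hb)

theorem G_iter (b : ℕ) (hb : 1 ≤ b) (hmul : ∀ n : ℕ, ∀ c : ℕ, c < b → t (b * n + c) = t n * t c)
    (habs : ‖ζ‖ = 1) (ht1 : ∀ n, |t n| ≤ 1) :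
    ∀ m j N, ‖G t ζ j N‖ ≤
      (∏ i ∈ Finset.range m, ‖S t ζ b (j * b ^ i)‖) *
        ‖G t ζ (j * b ^ m) (N / b ^ m)‖ + (m : ℝ) * (b : ℝ) ^ m * (b : ℝ) := by
  intro m
  induction m with
  | zero => intro j N; simp
  | succ m ih =>
      intro j N
      have h1 := G_one_step b hb hmul habs ht1 j N
      have h2 := ih (j * b) (N / b)
      have hidx : j * b * b ^ m = j * b ^ (m + 1) := by rw [pow_succ]; ring
      have hdiv : N / b / b ^ m = N / b ^ (m + 1) := by
        rw [Nat.div_div_eq_div_mul, pow_succ']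
      rw [hidx, hdiv] at h2
      have hprod : (∏ i ∈ Finset.range (m + 1), ‖S t ζ b (j * b ^ i)‖) =
          (∏ i ∈ Finset.range m, ‖S t ζ b (j * b * b ^ i)‖) *
            ‖S t ζ b j‖ := by
        rw [Finset.prod_range_succ']
        congr 1
        · refine Finset.prod_congr rfl fun i _ => ?_
          have : j * b ^ (i + 1) = j * b * b ^ i := by rw [pow_succ']; ring
          rw [this]
        · rw [pow_zero, mul_one]
      have hSb : ‖S t ζ b j‖ ≤ (b : ℝ) := abs_S_le habs ht1 b j
      have hS0 : (0:ℝ) ≤ ‖S t ζ b j‖ := norm_nonneg _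
      have hP0 : (0:ℝ) ≤ ∏ i ∈ Finset.range m, ‖S t ζ b (j * b * b ^ i)‖ :=
        Finset.prod_nonneg fun i _ => norm_nonneg _
      have hQ0 : (0:ℝ) ≤ ‖G t ζ (j * b ^ (m + 1)) (N / b ^ (m + 1))‖ :=
        norm_nonneg _
      have hb1 : (1:ℝ) ≤ (b:ℝ) := by exact_mod_cast hb
      have hbm1 : (1:ℝ) ≤ (b:ℝ) ^ (m + 1) := one_le_pow₀ hb1
      have herr : (0:ℝ) ≤ (m:ℝ) * (b:ℝ) ^ m * (b:ℝ) := by positivity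
      calc ‖G t ζ j N‖
          ≤ ‖S t ζ b j‖ * ‖G t ζ (j * b) (N / b)‖ + b := h1
        _ ≤ ‖S t ζ b j‖ *
              ((∏ i ∈ Finset.range m, ‖S t ζ b (j * b * b ^ i)‖) *
                ‖G t ζ (j * b ^ (m + 1)) (N / b ^ (m + 1))‖ +
                (m:ℝ) * (b:ℝ) ^ m * (b:ℝ)) + b := by
            have := mul_le_mul_of_nonneg_left h2 hS0
            linarith
        _ ≤ _ := by
            rw [hprod]
            push_cast
            have hb0 : (0:ℝ) ≤ (b:ℝ) := le_trans zero_le_one hb1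
            have hs1 := mul_le_mul_of_nonneg_right hSb herr
            have hpow : (b:ℝ) ^ (m + 1) = (b:ℝ) ^ m * b := by rw [pow_succ]
            set Sv := ‖S t ζ b j‖
            set P := ∏ i ∈ Finset.range m, ‖S t ζ b (j * b * b ^ i)‖
            set Q := ‖G t ζ (j * b ^ (m + 1)) (N / b ^ (m + 1))‖
            have e1 : Sv * (P * Q + (m:ℝ) * (b:ℝ) ^ m * b) = P * Sv * Q + Sv * ((m:ℝ) * (b:ℝ) ^ m * b) := by
              ring
            have e2 : (b:ℝ) * ((m:ℝ) * (b:ℝ) ^ m * b) = (m:ℝ) * (b:ℝ) ^ (m+1) * b := by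
              rw [hpow]; ring
            have e3 : (b:ℝ) ≤ (b:ℝ) ^ (m+1) * b := by
              nlinarith
            have e4 : ((m:ℝ) + 1) * (b:ℝ) ^ (m+1) * b = (m:ℝ) * (b:ℝ)^(m+1) * b + (b:ℝ)^(m+1) * b := by
              ring
            linarith

theorem ortho (hprim : IsPrimitiveRoot ζ p) (N : ℕ) :
    ∑ j ∈ Finset.range p, G t ζ j N =
      (p : ℂ) * ∑ n ∈ (Finset.range N).filter (fun n => p ∣ n), (t n : ℂ) := by
  unfold G
  rw [Finset.sum_comm, Finset.sum_filter, Finset.mul_sum]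
  refine Finset.sum_congr rfl fun n _ => ?_
  have hexp : ∀ j : ℕ, ζ ^ (j * n) = (ζ ^ n) ^ j := fun j => pow_mul' ζ j n
  calc ∑ j ∈ Finset.range p, (t n : ℂ) * ζ ^ (j * n)
      = (t n : ℂ) * ∑ j ∈ Finset.range p, (ζ ^ n) ^ j := by
        rw [Finset.mul_sum]
        exact Finset.sum_congr rfl fun j _ => by rw [hexp j]
    _ = (p : ℂ) * if p ∣ n then (t n : ℂ) else 0 := by
        by_cases hdvd : p ∣ n
        · have h1 : ζ ^ n = 1 := (hprim.pow_eq_one_iff_dvd n).mpr hdvd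
          simp [h1, hdvd]
          ring
        · have h1 : ζ ^ n ≠ 1 := fun h => hdvd ((hprim.pow_eq_one_iff_dvd n).mp h)
          have h2 : ∑ j ∈ Finset.range p, (ζ ^ n) ^ j = 0 := by
            rw [geom_sum_eq h1]
            rw [← pow_mul, mul_comm n p, pow_mul, hprim.pow_eq_one, one_pow]
            simp
          simp [h2, hdvd]

theorem prod_bound (b : ℕ) (hb : 2 ≤ b) {p : ℕ} (hp : p.Prime) (hbp : b < p)
    (hgen : ∀ x : ZMod p, x ≠ 0 → ∃ k : ℕ, (b : ZMod p) ^ k = x)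
    (hζp : ζ ^ p = 1)
    {ξ : ℝ}
    (hξ : (ξ : ℂ) = ∏ j ∈ Finset.Icc 1 (p - 1), S t ζ b j)
    (hdom : (∑ c ∈ Finset.range b, t c) ^ (p - 1) ≤ |ξ|)
    (j : ℕ) :
    ∏ i ∈ Finset.range (p - 1), ‖S t ζ b (j * b ^ i)‖ ≤ |ξ| := by
  haveI : Fact p.Prime := ⟨hp⟩
  have hp3 : 3 ≤ p := by
    rcases Nat.lt_or_ge p 3 with h | h
    · interval_cases p <;> omega
    · exact h
  have hpodd : Odd p := hp.odd_of_ne_two (by omega)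
  have hpeven : Even (p - 1) := Nat.Odd.sub_odd hpodd odd_one
  have hpb : ¬ p ∣ b := fun h => absurd (Nat.le_of_dvd (by omega) h) (by omega)
  by_cases hj : p ∣ j
  · -- all factors equal |∑ t c|
    have hfac : ∀ i : ℕ, ‖S t ζ b (j * b ^ i)‖ = |∑ c ∈ Finset.range b, t c| := by
      intro i
      have h0 : S t ζ b (j * b ^ i) = S t ζ b 0 :=
        S_per hζp ((Nat.modEq_zero_iff_dvd).mpr (hj.mul_right _)) b
      rw [h0]
      have : S t ζ b 0 = ((∑ c ∈ Finset.range b, t c : ℝ) : ℂ) := by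
        unfold S
        push_cast
        exact Finset.sum_congr rfl fun c _ => by rw [zero_mul, pow_zero, mul_one]
      rw [this, Complex.norm_real, Real.norm_eq_abs]
    rw [Finset.prod_congr rfl fun i _ => hfac i, Finset.prod_const, Finset.card_range]
    rw [hpeven.pow_abs]
    exact hdom
  · -- the product over the orbit equals |ξ|
    have hjz : ((j : ZMod p)) ≠ 0 := by
      rw [Ne, ZMod.natCast_eq_zero_iff]; exact hj
    have hbz : ((b : ZMod p)) ≠ 0 := by
      rw [Ne, ZMod.natCast_eq_zero_iff]; exact hpb
    have hmem : ∀ a ∈ Finset.range (p - 1), (j * b ^ a) % p ∈ Finset.Icc 1 (p - 1) := by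
      intro a _
      have hlt : (j * b ^ a) % p < p := Nat.mod_lt _ (by omega)
      have hne : (j * b ^ a) % p ≠ 0 := by
        intro h0
        have : p ∣ j * b ^ a := (Nat.dvd_iff_mod_eq_zero).mpr h0
        rcases (Nat.Prime.dvd_mul hp).mp this with h | h
        · exact hj h
        · exact hpb (hp.dvd_of_dvd_pow h)
      rw [Finset.mem_Icc]
      omega
    have hsurj : ∀ j' ∈ Finset.Icc 1 (p - 1), ∃ a, ∃ ha : a ∈ Finset.range (p - 1),
        (j * b ^ a) % p = j' := by
      intro j' hj'
      rw [Finset.mem_Icc] at hj'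
      have hj'z : ((j' : ZMod p)) ≠ 0 := by
        rw [Ne, ZMod.natCast_eq_zero_iff]
        intro h
        have := Nat.le_of_dvd (by omega) h
        omega
      have hx : ((j' : ZMod p)) * (j : ZMod p)⁻¹ ≠ 0 :=
        mul_ne_zero hj'z (inv_ne_zero hjz)
      obtain ⟨k, hk⟩ := hgen _ hx
      refine ⟨k % (p - 1), Finset.mem_range.mpr (Nat.mod_lt _ (by omega)), ?_⟩
      have hbk : ((b : ZMod p)) ^ (k % (p - 1)) = (b : ZMod p) ^ k := by
        conv_rhs => rw [← Nat.div_add_mod k (p - 1)]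
        rw [pow_add, pow_mul, ZMod.pow_card_sub_one_eq_one hbz, one_pow, one_mul]
      have hzmod : ((j * b ^ (k % (p - 1)) : ℕ) : ZMod p) = ((j' : ℕ) : ZMod p) := by
        push_cast
        rw [hbk, hk, ← mul_assoc]
        rw [mul_comm (j : ZMod p) (j' : ZMod p), mul_assoc, mul_inv_cancel₀ hjz, mul_one]
      have := (ZMod.natCast_eq_natCast_iff _ _ _).mp hzmod
      have h2 : (j * b ^ (k % (p - 1))) % p = j' % p := this
      rwa [Nat.mod_eq_of_lt (show j' < p by omega)] at h2
    have hinj := Finset.inj_on_of_surj_on_of_card_le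
      (f := fun a (_ : a ∈ Finset.range (p - 1)) => (j * b ^ a) % p)
      hmem hsurj (by rw [Finset.card_range, Nat.card_Icc]; omega)
    have hprodeq : ∏ i ∈ Finset.range (p - 1), ‖S t ζ b (j * b ^ i)‖ =
        ∏ j' ∈ Finset.Icc 1 (p - 1), ‖S t ζ b j'‖ := by
      refine Finset.prod_bij (fun a _ => (j * b ^ a) % p) hmem ?_ hsurj ?_
      · intro a₁ ha₁ a₂ ha₂ h
        exact hinj ha₁ ha₂ h
      · intro a _
        rw [S_per hζp (Nat.mod_modEq (j * b ^ a) p).symm b]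
    rw [hprodeq]
    have : ‖((ξ : ℝ) : ℂ)‖ = ∏ j' ∈ Finset.Icc 1 (p - 1), ‖S t ζ b j'‖ := by
      rw [hξ, norm_prod]
    rw [← this, Complex.norm_real, Real.norm_eq_abs]

end Rare


open Rare

theorem rarefaction_stmt2
    (b : ℕ) (hb : 2 ≤ b) (t : ℕ → ℝ)
    (ht0 : t 0 = 1)
    (hmul : ∀ n : ℕ, ∀ c : ℕ, c < b → t (b * n + c) = t n * t c)
    (hval : ∀ n : ℕ, t n = -1 ∨ t n = 0 ∨ t n = 1)
    (p : ℕ) (hp : p.Prime) (hbp : b < p)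
    (hgen : ∀ x : ZMod p, x ≠ 0 → ∃ k : ℕ, (b : ZMod p) ^ k = x)
    (ζ : ℂ) (hζ : ζ = Complex.exp (2 * Real.pi * Complex.I / p))
    (ξ : ℝ)
    (hξ : (ξ : ℂ) = ∏ j ∈ Finset.Icc 1 (p - 1), ∑ c ∈ Finset.range b, (t c : ℂ) * ζ ^ (j * c))
    (hdom : |ξ| > max ((∑ c ∈ Finset.range b, t c) ^ (p - 1)) 1) :
    ∃ C : ℝ, ∀ N : ℕ, 1 ≤ N →
      |∑ n ∈ (Finset.range N).filter (fun n => p ∣ n), t n| ≤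
        C * (N : ℝ) ^ (Real.log ξ / (((p : ℝ) - 1) * Real.log b)) := by
  classical
  have hp3 : 3 ≤ p := by
    have := hp.two_le
    rcases Nat.lt_or_ge p 3 with h | h
    · omega
    · omega
  have hprim : IsPrimitiveRoot ζ p := by
    rw [hζ]; exact Complex.isPrimitiveRoot_exp p (by omega)
  have hζp : ζ ^ p = 1 := hprim.pow_eq_one
  have habs : ‖ζ‖ = 1 := by
    have h1 : ‖ζ‖ ^ p = 1 := by rw [← norm_pow, hζp, norm_one]
    have h0 := norm_nonneg ζ
    rcases lt_trichotomy (‖ζ‖) 1 with h | h | h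
    · have := pow_lt_one₀ h0 h (show p ≠ 0 by omega)
      linarith
    · exact h
    · have := one_lt_pow₀ h (show p ≠ 0 by omega)
      linarith
  have ht1 : ∀ n, |t n| ≤ 1 := by
    intro n
    rcases hval n with h | h | h <;> rw [h] <;> norm_num
  set A : ℝ := |ξ| with hAdef
  have hA1 : 1 < A := lt_of_le_of_lt (le_max_right _ 1) hdom
  have hA0 : (0:ℝ) < A := by linarith
  have hdom' : (∑ c ∈ Finset.range b, t c) ^ (p - 1) ≤ |ξ| :=
    le_trans (le_max_left _ _) (le_of_lt hdom)
  have hξ' : (ξ : ℂ) = ∏ j ∈ Finset.Icc 1 (p - 1), S t ζ b j := hξ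
  have hpb : ¬ p ∣ b := fun h => absurd (Nat.le_of_dvd (by omega) h) (by omega)
  have hEuler : b ^ (p - 1) ≡ 1 [MOD p] := by
    have hco : Nat.Coprime b p := (Nat.Coprime.symm ((Nat.Prime.coprime_iff_not_dvd hp).mpr hpb))
    have := Nat.ModEq.pow_totient hco
    rwa [Nat.totient_prime hp] at this
  set D : ℝ := ((p - 1 : ℕ) : ℝ) * (b:ℝ) ^ (p - 1) * (b:ℝ) with hDdef
  have hD0 : (0:ℝ) ≤ D := by positivity
  set E : ℝ := D / (A - 1) with hEdef
  have hE0 : (0:ℝ) ≤ E := div_nonneg hD0 (by linarith)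
  have hED : E * (A - 1) = D := div_mul_cancel₀ _ (by linarith)
  set K : ℝ := E + 1 with hKdef
  have hK1 : (1:ℝ) ≤ K := by linarith
  clear_value A D E K
  have key : ∀ k : ℕ, ∀ j N : ℕ, N < b ^ ((p - 1) * k) →
      ‖G t ζ j N‖ ≤ K * A ^ k - E := by
    intro k
    induction k with
    | zero =>
        intro j N hN
        have hN0 : N = 0 := by
          simp only [Nat.mul_zero, pow_zero, Nat.lt_one_iff] at hN
          exact hN
        subst hN0
        have : G t ζ j 0 = 0 := by simp [G]
        rw [this, norm_zero, pow_zero]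
        linarith
    | succ k ih =>
        intro j N hN
        have hiter := G_iter b (by omega) hmul habs ht1 (p - 1) j N
        have hper : G t ζ (j * b ^ (p - 1)) (N / b ^ (p - 1)) = G t ζ j (N / b ^ (p - 1)) := by
          refine G_per hζp ?_ _
          have := (Nat.ModEq.mul_left j hEuler)
          rwa [mul_one] at this
        rw [hper] at hiter
        have hdivlt : N / b ^ (p - 1) < b ^ ((p - 1) * k) := by
          rw [Nat.div_lt_iff_lt_mul (pow_pos (by omega : 0 < b) _)]
          calc N < b ^ ((p - 1) * (k + 1)) := hN
            _ = b ^ ((p - 1) * k) * b ^ (p - 1) := by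
                rw [← pow_add, Nat.mul_succ]
        have h2 := ih j _ hdivlt
        have hPA := prod_bound b hb hp hbp hgen hζp hξ' hdom' j
        rw [← hAdef] at hPA
        have hQ0 : (0:ℝ) ≤ ‖G t ζ j (N / b ^ (p - 1))‖ := norm_nonneg _
        have h3 : (∏ i ∈ Finset.range (p - 1), ‖S t ζ b (j * b ^ i)‖) *
            ‖G t ζ j (N / b ^ (p - 1))‖ ≤ A * (K * A ^ k - E) :=
          mul_le_mul hPA h2 hQ0 (le_of_lt hA0)
        have hpow : A ^ (k + 1) = A ^ k * A := pow_succ A k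
        have e1 : A * (K * A ^ k - E) + D = K * (A ^ k * A) - E * A + D := by ring
        have : ‖G t ζ j N‖ ≤ A * (K * A ^ k - E) + D := by
          rw [hDdef]
          linarith [hiter, h3]
        rw [hpow]
        have hfin : A * (K * A ^ k - E) + D ≤ K * (A ^ k * A) - E := by
          rw [e1]
          have : E * A - E = D := by rw [← hED]; ring
          linarith
        linarith
  refine ⟨K * A, fun N hN1 => ?_⟩
  set L := Nat.log b N with hLdef
  set m := L / (p - 1) with hmdef
  set k := m + 1 with hkdef
  have hNk : N < b ^ ((p - 1) * k) := by
    rw [← Nat.log_lt_iff_lt_pow (by omega : 1 < b) (by omega : N ≠ 0)]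
    show Nat.log b N < (p - 1) * (Nat.log b N / (p - 1) + 1)
    have h1 := Nat.div_add_mod (Nat.log b N) (p - 1)
    have h2 : Nat.log b N % (p - 1) < p - 1 := Nat.mod_lt _ (by omega)
    rw [Nat.mul_succ]
    omega
  -- sum over j of |G|
  have hortho := ortho (t := t) hprim N
  set T : ℝ := ∑ n ∈ (Finset.range N).filter (fun n => p ∣ n), t n with hTdef
  have hTC : (∑ n ∈ (Finset.range N).filter (fun n => p ∣ n), (t n : ℂ)) = ((T : ℝ) : ℂ) := by
    rw [hTdef]; push_cast; rfl
  have habsT : (p : ℝ) * |T| = ‖∑ j ∈ Finset.range p, G t ζ j N‖ := by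
    rw [hortho, hTC, norm_mul, Complex.norm_natCast, Complex.norm_real, Real.norm_eq_abs]
  have hsum : ‖∑ j ∈ Finset.range p, G t ζ j N‖ ≤ (p : ℝ) * (K * A ^ k) := by
    refine le_trans (norm_sum_le _ _) ?_
    calc ∑ j ∈ Finset.range p, ‖G t ζ j N‖
        ≤ ∑ _j ∈ Finset.range p, (K * A ^ k) := by
          refine Finset.sum_le_sum fun j _ => ?_
          have := key k j N hNk
          linarith
      _ = (p : ℝ) * (K * A ^ k) := by
          rw [Finset.sum_const, Finset.card_range, nsmul_eq_mul]
  have hT : |T| ≤ K * A ^ k := by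
    have hppos : (0:ℝ) < (p:ℝ) := by exact_mod_cast (show 0 < p by omega)
    rw [← habsT] at hsum
    exact le_of_mul_le_mul_left hsum hppos
  -- now bound A ^ k
  have hlogb : (0:ℝ) < Real.log b := Real.log_pos (by exact_mod_cast by omega : (1:ℝ) < b)
  have hlogA : (0:ℝ) < Real.log A := Real.log_pos hA1
  have hlogξ : Real.log A = Real.log ξ := by rw [hAdef, Real.log_abs]
  set α : ℝ := Real.log ξ / (((p : ℝ) - 1) * Real.log b) with hαdef
  have hp1R : (0:ℝ) < (p:ℝ) - 1 := by
    have : (3:ℝ) ≤ (p:ℝ) := by exact_mod_cast hp3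
    linarith
  have hAm : A ^ m ≤ (N : ℝ) ^ α := by
    have hNR : (0:ℝ) < (N : ℝ) := by exact_mod_cast hN1
    rw [Real.rpow_def_of_pos hNR]
    have hAm2 : A ^ m = Real.exp ((m : ℝ) * Real.log A) := by
      rw [← Real.exp_log hA0, ← Real.exp_nat_mul, Real.log_exp]
    rw [hAm2]
    apply Real.exp_le_exp.mpr
    -- (m : ℝ) * log A ≤ α * log N
    have hcast : ((p - 1 : ℕ) : ℝ) = (p : ℝ) - 1 := by
      rw [Nat.cast_sub (by omega)]; norm_num
    have h1 : (m : ℝ) * ((p:ℝ) - 1) ≤ (L : ℝ) := by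
      have := Nat.div_mul_le_self L (p - 1)
      have h := this
      rw [hmdef]
      calc ((L / (p-1) : ℕ) : ℝ) * ((p:ℝ) - 1) = ((L / (p-1) : ℕ) : ℝ) * ((p - 1 : ℕ) : ℝ) := by
            rw [hcast]
        _ = (((L / (p-1)) * (p-1) : ℕ) : ℝ) := by push_cast; ring
        _ ≤ (L : ℝ) := by exact_mod_cast this
    have h2 : (L : ℝ) * Real.log b ≤ Real.log N := by
      have hpow : (b : ℝ) ^ L ≤ (N : ℝ) := by exact_mod_cast Nat.pow_log_le_self b (by omega : N ≠ 0)
      have := Real.log_le_log (by positivity) hpow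
      rwa [Real.log_pow] at this
    have h3 : (m : ℝ) * (((p:ℝ) - 1) * Real.log b) ≤ Real.log N := by
      calc (m : ℝ) * (((p:ℝ) - 1) * Real.log b) = ((m : ℝ) * ((p:ℝ) - 1)) * Real.log b := by ring
        _ ≤ (L : ℝ) * Real.log b := mul_le_mul_of_nonneg_right h1 (le_of_lt hlogb)
        _ ≤ Real.log N := h2
    have hden : (0:ℝ) < ((p:ℝ) - 1) * Real.log b := mul_pos hp1R hlogb
    rw [hαdef, ← hlogξ, ← mul_div_assoc, le_div_iff₀ hden]
    calc (m : ℝ) * Real.log A * (((p:ℝ) - 1) * Real.log b)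
        = ((m : ℝ) * (((p:ℝ) - 1) * Real.log b)) * Real.log A := by ring
      _ ≤ Real.log N * Real.log A := mul_le_mul_of_nonneg_right h3 (le_of_lt hlogA)
  calc |T| ≤ K * A ^ k := hT
    _ = (K * A) * A ^ m := by rw [hkdef, pow_succ]; ring
    _ ≤ (K * A) * (N : ℝ) ^ α := by
        apply mul_le_mul_of_nonneg_left hAm
        positivity
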